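/- arXiv:2412.05956 — 3 statements merged into one kernel-verified Lean document; each statement's English description precedes it below -/
import Mathlib

section
/- Let m ≥ 1 and 0 < k ≤ m. For the uncertainty set U = {h ∈ [0,1]^m : ∑ᵢ hᵢ ≤ k}, the set Û = β · conv(e₁, …, e_m, (k/m)·𝟏) with β = min(k, m/k) dominates U; that is, for every h ∈ U there exists ĥ ∈ Û with ĥ ≥ h componentwise. -/
open Pointwise
/-- the scaled convex hull `β • conv(e₁, …, e_m, (k/m)·𝟏)` with
`β = min(k, m/k)` dominates the box-with-budget uncertainty set
`U = {h ∈ [0,1]^m : ∑ᵢ hᵢ ≤ k}`. -/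
theorem scaled_hull_dominates_budget_box
    (m : ℕ) (hm : 1 ≤ m) (k : ℝ) (hk0 : 0 < k) (hkm : k ≤ m)
    (U : Set (Fin m → ℝ))
    (hU : U = {h : Fin m → ℝ | (∀ i, h i ∈ Set.Icc (0 : ℝ) 1) ∧ ∑ i, h i ≤ k})
    (β : ℝ) (hβ : β = min k ((m : ℝ) / k))
    (Uhat : Set (Fin m → ℝ))
    (hUhat : Uhat = β • convexHull ℝ
      (Set.range (fun i : Fin m => (Pi.single i 1 : Fin m → ℝ)) ∪
        {fun _ : Fin m => k / m})) :
    ∀ h ∈ U, ∃ hhat ∈ Uhat, ∀ i, h i ≤ hhat i := by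
  subst hU hβ hUhat
  intro h hh
  obtain ⟨hbox, hsum⟩ := hh
  have hm0 : (0:ℝ) < m := by exact_mod_cast Nat.lt_of_lt_of_le Nat.zero_lt_one hm
  set V : Set (Fin m → ℝ) :=
    (Set.range (fun i : Fin m => (Pi.single i 1 : Fin m → ℝ)) ∪ {fun _ : Fin m => k / m})
  rcases le_total k ((m : ℝ)/k) with hc | hc
  · rw [min_eq_left hc]
    set S : ℝ := ∑ i, h i with hS
    set w : Option (Fin m) → ℝ := fun o => o.elim (1 - S/k) (fun i => h i / k) with hw
    set z : Option (Fin m) → (Fin m → ℝ) :=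
      fun o => o.elim (fun _ => k/m) (fun i => Pi.single i 1) with hz
    have hmem : ∑ o : Option (Fin m), w o • z o ∈ convexHull ℝ V := by
      apply Convex.sum_mem (convex_convexHull ℝ V)
      · intro o _
        cases o with
        | none =>
          simp only [hw, Option.elim]
          have : S / k ≤ 1 := (div_le_one hk0).2 hsum
          linarith
        | some i =>
          simp only [hw, Option.elim]
          exact div_nonneg (hbox i).1 hk0.le
      · rw [Fintype.sum_option]
        simp only [hw, Option.elim]
        rw [← Finset.sum_div]
        field_simp
        linarith
      · intro o _
        apply subset_convexHull
        cases o with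
        | none => exact Or.inr rfl
        | some i => exact Or.inl ⟨i, rfl⟩
    refine ⟨k • ∑ o : Option (Fin m), w o • z o, Set.smul_mem_smul_set hmem, ?_⟩
    intro i
    have hval : (∑ o : Option (Fin m), w o • z o) i = h i / k + (1 - S/k) * (k/m) := by
      rw [Finset.sum_apply]
      rw [Fintype.sum_option]
      simp only [hw, hz, Option.elim, Pi.smul_apply, smul_eq_mul]
      have : ∑ j : Fin m, h j / k * (Pi.single j 1 : Fin m → ℝ) i = h i / k := by
        rw [Finset.sum_eq_single i]
        · simp
        · intro j _ hji; simp [Pi.single_apply, hji]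
        · simp
      rw [this]; ring
    have : (k • ∑ o : Option (Fin m), w o • z o) i
        = h i + k * ((1 - S/k) * (k/m)) := by
      simp only [Pi.smul_apply, smul_eq_mul, hval]
      field_simp
    rw [this]
    have h1 : 0 ≤ 1 - S/k := by
      have : S / k ≤ 1 := (div_le_one hk0).2 hsum
      linarith
    have h2 : 0 ≤ k/m := div_nonneg hk0.le hm0.le
    nlinarith [mul_nonneg h1 h2]
  · rw [min_eq_right hc]
    refine ⟨((m:ℝ)/k) • (fun _ => k/m : Fin m → ℝ),
      Set.smul_mem_smul_set (subset_convexHull ℝ V (Or.inr rfl)), ?_⟩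
    intro i
    have : (((m:ℝ)/k) • (fun _ => k/m : Fin m → ℝ)) i = 1 := by
      simp only [Pi.smul_apply, smul_eq_mul]
      field_simp
    rw [this]
    exact (hbox i).2
end

section
/- Let s₁ ≤ s₂ ≤ … ≤ s_M be i.i.d. real-valued scores drawn from a continuous distribution P, and let s be a fresh independent draw from P. If q is the ⌈(M+1)(1−α)⌉-th smallest of the M calibration scores (with α ∈ (0,1) such that ⌈(M+1)(1−α)⌉ ≤ M), then 1 − α ≤ P(s ≤ q) ≤ 1 − α + 1/(M+1). -/
open MeasureTheory ProbabilityTheory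
open scoped ENNReal

section Aux

/-- countP of a sorted list vs getD. -/
lemma sorted_getD_lt_iff (t : ℝ) :
    ∀ (l : List ℝ), l.Pairwise (· ≤ ·) → ∀ m, m < l.length →
      (l.getD m 0 < t ↔ m < l.countP (fun x => decide (x < t))) := by
  intro l
  induction l with
  | nil => intro _ m hm; simp at hm
  | cons a l ih =>
    intro hs m hm
    have hsl : l.Pairwise (· ≤ ·) := hs.of_cons
    have ha : ∀ x ∈ l, a ≤ x := fun x hx => (List.pairwise_cons.mp hs).1 x hx
    cases m with
    | zero =>
      simp only [List.getD_cons_zero, List.countP_cons]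
      constructor
      · intro h; simp [h]
      · intro h
        by_contra hat
        push_neg at hat
        have h0 : l.countP (fun x => decide (x < t)) = 0 := by
          rw [List.countP_eq_zero]
          intro x hx
          simp only [decide_eq_true_eq]
          exact not_lt.2 (le_trans hat (ha x hx))
        simp [h0, not_lt.2 hat] at h
    | succ m =>
      simp only [List.getD_cons_succ, List.countP_cons]
      have hm' : m < l.length := by simpa using hm
      rw [ih hsl m hm']
      by_cases hat : a < t
      · simp [hat]
      · have h0 : l.countP (fun x => decide (x < t)) = 0 := by
          rw [List.countP_eq_zero]
          intro x hx
          simp only [decide_eq_true_eq]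
          exact not_lt.2 (le_trans (not_lt.1 hat) (ha x hx))
        have hmem : l.getD m 0 ∈ l := by
          rw [List.getD_eq_getElem _ _ hm']; exact List.getElem_mem _
        have : ¬ l.getD m 0 < t := not_lt.2 (le_trans (not_lt.1 hat) (ha _ hmem))
        simp [h0, this, hat]

lemma countP_eq_sum_list {α : Type*} (q : α → Bool) :
    ∀ l : List α, l.countP q = (l.map (fun a => if q a then 1 else 0)).sum := by
  intro l
  induction l with
  | nil => simp
  | cons a l ih =>
    simp only [List.countP_cons, List.map_cons, List.sum_cons, ih]
    by_cases h : q a <;> simp [h, Nat.add_comm]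

lemma countP_ofFn {n : ℕ} (g : Fin n → ℝ) (p : ℝ → Bool) :
    (List.ofFn g).countP p = (Finset.univ.filter (fun j => p (g j) = true)).card := by
  classical
  rw [countP_eq_sum_list, List.map_ofFn, List.sum_ofFn, Finset.card_filter]
  rfl

/-- the number of indices `j ≠ i` with `x j < x i`. -/
noncomputable def rankN {m : ℕ} (x : Fin m → ℝ) (i : Fin m) : ℕ :=
  (Finset.univ.filter (fun j => j ≠ i ∧ x j < x i)).card

lemma measurable_rankN {m : ℕ} (i : Fin m) :
    Measurable (fun x : Fin m → ℝ => rankN x i) := by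
  classical
  have : (fun x : Fin m → ℝ => rankN x i)
      = fun x => ∑ j : Fin m, if j ≠ i ∧ x j < x i then 1 else 0 := by
    funext x; rw [rankN, Finset.card_filter]
  rw [this]
  refine Finset.measurable_sum _ (fun j _ => ?_)
  by_cases hj : j = i
  · simp [hj]
  · have : (fun x : Fin m → ℝ => if j ≠ i ∧ x j < x i then (1:ℕ) else 0)
        = fun x => if x j < x i then 1 else 0 := by
      funext x; simp [hj]
    rw [this]
    exact Measurable.ite (measurableSet_lt (measurable_pi_apply j) (measurable_pi_apply i))
      measurable_const measurable_const

lemma rankN_comp {m : ℕ} (x : Fin m → ℝ) (e : Equiv.Perm (Fin m)) (i : Fin m) :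
    rankN (x ∘ e) i = rankN x (e i) := by
  classical
  refine Finset.card_bij' (fun j _ => e j) (fun l _ => e.symm l) ?_ ?_ ?_ ?_
  · intro j hj
    simp only [Finset.mem_filter, Finset.mem_univ, true_and, Function.comp_apply] at hj ⊢
    exact ⟨fun h => hj.1 (e.injective h), hj.2⟩
  · intro l hl
    simp only [Finset.mem_filter, Finset.mem_univ, true_and, Function.comp_apply,
      Equiv.apply_symm_apply] at hl ⊢
    exact ⟨fun h => hl.1 (by rw [← h, Equiv.apply_symm_apply]), hl.2⟩
  · intro j _; simp
  · intro l _; simp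

lemma rankN_lt_of_lt {m : ℕ} {x : Fin m → ℝ} (hx : Function.Injective x)
    {i j : Fin m} (hij : x i < x j) : rankN x i < rankN x j := by
  classical
  have hne : i ≠ j := fun h => absurd hij (by simp [h])
  apply Finset.card_lt_card
  constructor
  · intro l hl
    simp only [Finset.mem_filter, Finset.mem_univ, true_and] at hl ⊢
    have hlj : x l < x j := lt_trans hl.2 hij
    exact ⟨fun h => absurd hlj (by simp [h]), hlj⟩
  · intro hsub
    have : i ∈ Finset.univ.filter (fun l => l ≠ j ∧ x l < x j) := by
      simp [hne, hij]
    have := hsub this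
    simp at this
  
lemma rankN_inj {m : ℕ} {x : Fin m → ℝ} (hx : Function.Injective x) :
    Function.Injective (rankN x) := by
  intro i j h
  by_contra hne
  rcases lt_trichotomy (x i) (x j) with hlt | heq | hgt
  · exact absurd h (Nat.ne_of_lt (rankN_lt_of_lt hx hlt))
  · exact hne (hx heq)
  · exact absurd h.symm (Nat.ne_of_lt (rankN_lt_of_lt hx hgt))

lemma rankN_le {m : ℕ} (x : Fin m → ℝ) (i : Fin m) : rankN x i ≤ m - 1 := by
  classical
  have hsub : Finset.univ.filter (fun j => j ≠ i ∧ x j < x i) ⊆ Finset.univ.erase i := by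
    intro l hl
    simp only [Finset.mem_filter, Finset.mem_univ, true_and] at hl
    exact Finset.mem_erase.2 ⟨hl.1, Finset.mem_univ _⟩
  calc rankN x i ≤ (Finset.univ.erase i).card := Finset.card_le_card hsub
    _ = m - 1 := by rw [Finset.card_erase_of_mem (Finset.mem_univ _)]; simp

lemma card_rank_lt {m k : ℕ} (hk : k ≤ m) (x : Fin m → ℝ) (hx : Function.Injective x) :
    (Finset.univ.filter (fun i => rankN x i < k)).card = k := by
  classical
  rcases Nat.eq_zero_or_pos m with hm | hm
  · subst hm
    interval_cases k
    simp
  have himg : Finset.univ.image (rankN x) = Finset.range m := by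
    apply Finset.eq_of_subset_of_card_le
    · intro c hc
      rcases Finset.mem_image.1 hc with ⟨i, _, rfl⟩
      exact Finset.mem_range.2 (lt_of_le_of_lt (rankN_le x i) (by omega))
    · rw [Finset.card_range, Finset.card_image_of_injective _ (rankN_inj hx)]
      simp
  have hbij : (Finset.univ.filter (fun i => rankN x i < k)).card = (Finset.range k).card := by
    refine Finset.card_bij (fun i _ => rankN x i) ?_ ?_ ?_
    · intro i hi
      simp only [Finset.mem_filter] at hi
      exact Finset.mem_range.2 hi.2
    · intro i _ j _ h
      exact rankN_inj hx h
    · intro c hc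
      have hcm : c ∈ Finset.range m :=
        Finset.mem_range.2 (lt_of_lt_of_le (Finset.mem_range.1 hc) hk)
      rw [← himg] at hcm
      rcases Finset.mem_image.1 hcm with ⟨i, _, rfl⟩
      exact ⟨i, Finset.mem_filter.2 ⟨Finset.mem_univ _, Finset.mem_range.1 hc⟩, rfl⟩
  rw [hbij, Finset.card_range]

lemma card_succAbove {m : ℕ} (x : Fin (m+1) → ℝ) (i : Fin (m+1)) (t : ℝ) :
    (Finset.univ.filter (fun j : Fin m => x (i.succAbove j) < t)).card
      = (Finset.univ.filter (fun j : Fin (m+1) => j ≠ i ∧ x j < t)).card := by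
  classical
  refine Finset.card_bij (fun j _ => i.succAbove j) ?_ ?_ ?_
  · intro j hj
    simp only [Finset.mem_filter, Finset.mem_univ, true_and] at hj ⊢
    exact ⟨Fin.succAbove_ne i j, hj⟩
  · intro j _ j' _ h
    exact Fin.succAbove_right_injective h
  · intro l hl
    simp only [Finset.mem_filter, Finset.mem_univ, true_and] at hl
    rcases Fin.exists_succAbove_eq hl.1 with ⟨j, rfl⟩
    exact ⟨j, Finset.mem_filter.2 ⟨Finset.mem_univ _, hl.2⟩, rfl⟩

end Aux

/-- split conformal coverage. -/
theorem split_conformal_coverage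
    {Ω : Type*} [MeasurableSpace Ω] (μ : Measure Ω) [IsProbabilityMeasure μ]
    (M : ℕ) (hM : 1 ≤ M) (S : Fin (M + 1) → Ω → ℝ)
    (hmeas : ∀ i, Measurable (S i))
    (hindep : iIndepFun S μ)
    (hident : ∀ i j, IdentDistrib (S i) (S j) μ μ)
    (hcont : ∀ x : ℝ, μ {ω | S 0 ω = x} = 0)
    (α : ℝ) (hα : α ∈ Set.Ioo (0 : ℝ) 1)
    (hk : ⌈((M : ℝ) + 1) * (1 - α)⌉₊ ≤ M)
    (q : Ω → ℝ)
    (hq : ∀ ω, q ω =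
      (List.insertionSort (· ≤ ·) (List.ofFn fun i : Fin M => S i.castSucc ω)).getD
        (⌈((M : ℝ) + 1) * (1 - α)⌉₊ - 1) 0) :
    1 - α ≤ (μ {ω | S (Fin.last M) ω ≤ q ω}).toReal ∧
    (μ {ω | S (Fin.last M) ω ≤ q ω}).toReal ≤ 1 - α + 1 / ((M : ℝ) + 1) := by
  classical
  obtain ⟨hα0, hα1⟩ := hα
  set k : ℕ := ⌈((M : ℝ) + 1) * (1 - α)⌉₊ with hkdef
  have hx0 : (0:ℝ) < ((M : ℝ) + 1) * (1 - α) := mul_pos (by positivity) (by linarith)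
  have hk1 : 1 ≤ k := Nat.one_le_iff_ne_zero.2 (by
    intro h
    have := Nat.ceil_pos.2 hx0
    omega)
  -- the joint distribution
  set T : Ω → (Fin (M+1) → ℝ) := fun ω i => S i ω with hTdef
  have hT : Measurable T := measurable_pi_lambda _ (fun i => hmeas i)
  set ρ : Measure ℝ := μ.map (S 0) with hρdef
  have hρprob : IsProbabilityMeasure ρ := Measure.isProbabilityMeasure_map (hmeas 0).aemeasurable
  have hρi : ∀ i, μ.map (S i) = ρ := fun i => (hident i 0).map_eq
  set ν : Measure (Fin (M+1) → ℝ) := Measure.pi (fun _ => ρ) with hνdef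
  have hjoint : ν = μ.map T := by
    refine Measure.pi_eq ?_
    intro s hs
    rw [Measure.map_apply hT (MeasurableSet.univ_pi hs)]
    have hTpre : T ⁻¹' Set.pi Set.univ s = ⋂ i, S i ⁻¹' s i := by
      ext ω; simp [Set.mem_pi, hTdef]
    rw [hTpre, hindep.meas_iInter (fun i => ⟨s i, hs i, rfl⟩)]
    refine Finset.prod_congr rfl (fun i _ => ?_)
    rw [← hρi i, Measure.map_apply (hmeas i) (hs i)]
  -- the events
  set B : Fin (M+1) → Set (Fin (M+1) → ℝ) := fun i => {x | rankN x i < k} with hBdef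
  have hB : ∀ i, MeasurableSet (B i) := fun i =>
    (measurable_rankN i) (measurableSet_Iio (a := k))
  set A : Fin (M+1) → Set Ω := fun i => T ⁻¹' (B i) with hAdef
  have hA : ∀ i, MeasurableSet (A i) := fun i => hT (hB i)
  have hμA : ∀ i, μ (A i) = ν (B i) := by
    intro i
    rw [hjoint, Measure.map_apply hT (hB i)]
  -- exchangeability : ν (B i) is constant in i
  have hexch : ∀ i, ν (B i) = ν (B (Fin.last M)) := by
    intro i
    set σ : Equiv.Perm (Fin (M+1)) := Equiv.swap i (Fin.last M) with hσdef
    have hmp : MeasurePreserving (MeasurableEquiv.piCongrLeft (fun _ => ℝ) σ) ν ν :=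
      measurePreserving_piCongrLeft (fun _ => ρ) σ
    have happly : ∀ (x : Fin (M+1) → ℝ),
        (MeasurableEquiv.piCongrLeft (fun _ => ℝ) σ) x = x ∘ σ.symm := by
      intro x
      funext j
      have := MeasurableEquiv.piCongrLeft_apply_apply σ (β := fun _ => ℝ) x (σ.symm j)
      rwa [Equiv.apply_symm_apply] at this
    have hpre : (MeasurableEquiv.piCongrLeft (fun _ => ℝ) σ) ⁻¹' (B (Fin.last M))
        = B (σ (Fin.last M)) := by
      ext x
      simp only [Set.mem_preimage, hBdef, Set.mem_setOf_eq, happly]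
      rw [show (x ∘ ⇑σ.symm) = x ∘ ⇑(σ⁻¹ : Equiv.Perm (Fin (M+1))) by rfl]
      rw [rankN_comp x (σ⁻¹) (Fin.last M)]
      rw [show (σ⁻¹ : Equiv.Perm (Fin (M+1))) (Fin.last M) = σ (Fin.last M) by
        simp [hσdef, Equiv.swap_inv]]
    have := hmp.measure_preimage (hB (Fin.last M)).nullMeasurableSet
    rw [hpre] at this
    have hσlast : σ (Fin.last M) = i := by simp [hσdef, Equiv.swap_apply_right]
    rw [hσlast] at this
    exact this
  -- a.e. distinctness
  have hpair : ∀ i j : Fin (M+1), i ≠ j → μ {ω | S i ω = S j ω} = 0 := by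
    intro i j hij
    have hif : IndepFun (S i) (S j) μ := hindep.indepFun hij
    have hmapped : μ.map (fun ω => (S i ω, S j ω)) = (μ.map (S i)).prod (μ.map (S j)) :=
      (indepFun_iff_map_prod_eq_prod_map_map (hmeas i).aemeasurable
        (hmeas j).aemeasurable).1 hif
    have hdiag : MeasurableSet {p : ℝ × ℝ | p.1 = p.2} :=
      measurableSet_eq_fun measurable_fst measurable_snd
    have hprem : Measurable (fun ω => (S i ω, S j ω)) := (hmeas i).prodMk (hmeas j)
    have h1 : μ {ω | S i ω = S j ω}
        = μ.map (fun ω => (S i ω, S j ω)) {p : ℝ × ℝ | p.1 = p.2} := by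
      rw [Measure.map_apply hprem hdiag]; rfl
    rw [h1, hmapped, hρi i, hρi j, Measure.prod_apply hdiag]
    have : ∀ x : ℝ, ρ (Prod.mk x ⁻¹' {p : ℝ × ℝ | p.1 = p.2}) = 0 := by
      intro x
      have hxy : (Prod.mk x ⁻¹' {p : ℝ × ℝ | p.1 = p.2}) = {x} := by
        ext y; simp [eq_comm]
      rw [hxy, hρdef, Measure.map_apply (hmeas 0) (measurableSet_singleton x)]
      have : S 0 ⁻¹' {x} = {ω | S 0 ω = x} := rfl
      rw [this]; exact hcont x
    simp only [this]
    simp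
  set D : Set Ω := {ω | Function.Injective (fun i => S i ω)} with hDdef
  have hDc : μ Dᶜ = 0 := by
    have hsub : Dᶜ ⊆ ⋃ (i : Fin (M+1)) (j : Fin (M+1)) (_ : i ≠ j), {ω | S i ω = S j ω} := by
      intro ω hω
      simp only [hDdef, Set.mem_compl_iff, Set.mem_setOf_eq, Function.Injective] at hω
      push_neg at hω
      rcases hω with ⟨i, j, hval, hij⟩
      exact Set.mem_iUnion.2 ⟨i, Set.mem_iUnion.2 ⟨j, Set.mem_iUnion.2 ⟨hij, hval⟩⟩⟩
    refine measure_mono_null hsub ?_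
    refine measure_iUnion_null (fun i => measure_iUnion_null (fun j => ?_))
    by_cases hij : i = j
    · simp [hij]
    · simpa [hij] using hpair i j hij
  -- the sum of the indicators is k a.e.
  have hcount : ∀ ω ∈ D, (Finset.univ.filter (fun i : Fin (M+1) => ω ∈ A i)).card = k := by
    intro ω hω
    have hinj : Function.Injective (fun i => S i ω) := hω
    have : Finset.univ.filter (fun i : Fin (M+1) => ω ∈ A i)
        = Finset.univ.filter (fun i => rankN (T ω) i < k) :=
      Finset.filter_congr (fun i _ => by simp [hAdef, hBdef])
    rw [this]
    exact card_rank_lt (by omega) (T ω) hinj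
  have hsum : ∑ i : Fin (M+1), μ (A i) = (k : ℝ≥0∞) := by
    have h1 : ∀ i : Fin (M+1), μ (A i) = ∫⁻ ω, (A i).indicator (fun _ => (1:ℝ≥0∞)) ω ∂μ := by
      intro i
      rw [lintegral_indicator (hA i)]
      simp
    calc ∑ i : Fin (M+1), μ (A i)
        = ∑ i : Fin (M+1), ∫⁻ ω, (A i).indicator (fun _ => (1:ℝ≥0∞)) ω ∂μ := by
          exact Finset.sum_congr rfl (fun i _ => h1 i)
      _ = ∫⁻ ω, ∑ i : Fin (M+1), (A i).indicator (fun _ => (1:ℝ≥0∞)) ω ∂μ := by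
          rw [lintegral_finset_sum]
          exact fun i _ => (measurable_const.indicator (hA i))
      _ = ∫⁻ _, (k : ℝ≥0∞) ∂μ := by
          refine lintegral_congr_ae ?_
          filter_upwards [measure_eq_zero_iff_ae_notMem.1 hDc] with ω hω
          have hωD : ω ∈ D := not_not.1 hω
          have : ∑ i : Fin (M+1), (A i).indicator (fun _ => (1:ℝ≥0∞)) ω
              = (Finset.univ.filter (fun i : Fin (M+1) => ω ∈ A i)).card := by
            rw [Finset.card_filter]
            push_cast
            refine Finset.sum_congr rfl (fun i _ => ?_)
            by_cases h : ω ∈ A i <;> simp [h, Set.indicator]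
          rw [this, hcount ω hωD]
      _ = (k : ℝ≥0∞) := by simp
  -- each has measure k/(M+1)
  have hAlast : μ (A (Fin.last M)) = (k : ℝ≥0∞) / ((M:ℝ≥0∞) + 1) := by
    have hconst : ∀ i, μ (A i) = μ (A (Fin.last M)) := by
      intro i; rw [hμA i, hμA (Fin.last M), hexch i]
    have : ((M:ℝ≥0∞) + 1) * μ (A (Fin.last M)) = (k : ℝ≥0∞) := by
      rw [← hsum, Finset.sum_congr rfl (fun i _ => hconst i), Finset.sum_const]
      simp [Finset.card_univ]
    exact (ENNReal.eq_div_iff (by simp) (by simp)).2 this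
  -- identify the event
  have hevent : {ω | S (Fin.last M) ω ≤ q ω} = A (Fin.last M) := by
    ext ω
    simp only [Set.mem_setOf_eq, hAdef, hBdef, Set.mem_preimage]
    set l : List ℝ := List.ofFn (fun i : Fin M => S i.castSucc ω) with hldef
    set sl : List ℝ := List.insertionSort (· ≤ ·) l with hsldef
    have hslen : sl.length = M := by
      rw [hsldef, (List.perm_insertionSort _ l).length_eq, hldef, List.length_ofFn]
    have hssort : sl.Pairwise (· ≤ ·) := List.pairwise_insertionSort _ l
    have hkm : k - 1 < M := by omega
    have hcp : sl.countP (fun x => decide (x < S (Fin.last M) ω))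
        = rankN (T ω) (Fin.last M) := by
      rw [hsldef, (List.perm_insertionSort _ l).countP_eq, hldef, countP_ofFn]
      rw [rankN]
      have hcs := card_succAbove (T ω) (Fin.last M) (S (Fin.last M) ω)
      have heq : Finset.univ.filter
            (fun j : Fin M => decide (S j.castSucc ω < S (Fin.last M) ω) = true)
          = Finset.univ.filter
            (fun j : Fin M => T ω ((Fin.last M).succAbove j) < T ω (Fin.last M)) :=
        Finset.filter_congr (fun j _ => by simp [Fin.succAbove_last, hTdef])
      rw [heq, hcs]
    have hiff := sorted_getD_lt_iff (S (Fin.last M) ω) sl hssort (k-1) (by omega)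
    rw [hq ω]
    constructor
    · intro h
      have : ¬ (sl.getD (k-1) 0 < S (Fin.last M) ω) := not_lt.2 h
      rw [hiff] at this
      push_neg at this
      rw [hcp] at this
      omega
    · intro h
      by_contra hcon
      push_neg at hcon
      have : k - 1 < sl.countP (fun x => decide (x < S (Fin.last M) ω)) := hiff.1 hcon
      rw [hcp] at this
      omega
  -- arithmetic
  have htoReal : (μ {ω | S (Fin.last M) ω ≤ q ω}).toReal = (k : ℝ) / ((M:ℝ) + 1) := by
    rw [hevent, hAlast, ENNReal.toReal_div]
    rw [ENNReal.toReal_add (by simp) (by simp)]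
    simp
  rw [htoReal]
  have hMpos : (0:ℝ) < (M:ℝ) + 1 := by positivity
  have hceil_ge : ((M : ℝ) + 1) * (1 - α) ≤ (k : ℝ) := Nat.le_ceil _
  have hceil_lt : (k : ℝ) < ((M : ℝ) + 1) * (1 - α) + 1 :=
    Nat.ceil_lt_add_one (le_of_lt hx0)
  constructor
  · rw [le_div_iff₀ hMpos]
    calc (1 - α) * ((M:ℝ) + 1) = ((M : ℝ) + 1) * (1 - α) := by ring
      _ ≤ (k : ℝ) := hceil_ge
  · rw [div_le_iff₀ hMpos]
    calc (k : ℝ) ≤ ((M : ℝ) + 1) * (1 - α) + 1 := le_of_lt hceil_lt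
      _ = (1 - α + 1 / ((M : ℝ) + 1)) * ((M:ℝ) + 1) := by field_simp
end

section
/- If q* is chosen as the ⌊(M+1)(1−α)⌋-th smallest element of M exchangeable scores s₁,…,s_M (and the new score s_{M+1} is exchangeable with them, ties occurring with probability zero), then the prediction box [f^{α/2}(w) − q*𝟏, f^{1−α/2}(w) + q*𝟏] contains the true y with probability at least ⌊(M+1)(1−α)⌋/(M+1). -/
open MeasureTheory ProbabilityTheory Finset
open scoped ENNReal NNReal

lemma cnt_eq (n : ℕ) (f : Fin n → ℝ) (p : ℝ → Prop) [DecidablePred p] :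
    (List.ofFn f).countP (fun x => decide (p x)) =
      (Finset.univ.filter fun i => p (f i)).card := by
  rw [List.ofFn_eq_map, List.countP_map, Fin.univ_def]
  simp only [Finset.filter, Finset.card, Multiset.countP, Function.comp,
    List.countP_eq_length_filter]
  rfl

lemma sorted_le_get_iff : ∀ (l : List ℝ), l.Pairwise (· ≤ ·) → ∀ s : ℝ, s ∉ l →
    ∀ (j : ℕ) (hj : j < l.length),
    (s ≤ l.get ⟨j, hj⟩ ↔ l.countP (fun x => decide (x < s)) ≤ j) := by
  intro l
  induction l with
  | nil => intro _ s _ j hj; simp at hj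
  | cons a t ih =>
    intro hsort s hs j hj
    have ha : s ≠ a := fun h => hs (h ▸ (List.mem_cons_self (a := a) (l := t)))
    have hst : t.Pairwise (· ≤ ·) := hsort.of_cons
    have hat : ∀ b ∈ t, a ≤ b := fun b hb => List.rel_of_pairwise_cons hsort hb
    cases j with
    | zero =>
      simp only [List.get, List.countP_cons]
      constructor
      · intro h
        have h1 : ¬ (a < s) := not_lt.2 h
        have h2 : t.countP (fun x => decide (x < s)) = 0 := by
          rw [List.countP_eq_zero]
          intro b hb
          simp only [decide_eq_true_eq, not_lt]
          exact le_trans h (hat b hb)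
        simp [h1, h2]
      · intro h
        by_contra hc
        push_neg at hc
        simp [hc] at h
    | succ j' =>
      simp only [List.get]
      have hj' : j' < t.length := by simpa using hj
      rcases lt_or_ge a s with hlt | hge
      · rw [ih hst s (fun h => hs (List.mem_cons_of_mem a h)) j' hj']
        rw [List.countP_cons]
        simp [hlt]
        try omega
      · have hgt : s < a := lt_of_le_of_ne hge ha
        constructor
        · intro _
          have : (a :: t).countP (fun x => decide (x < s)) = 0 := by
            rw [List.countP_eq_zero]
            intro b hb
            simp only [decide_eq_true_eq, not_lt]
            rcases List.mem_cons.1 hb with rfl | hb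
            · exact le_of_lt hgt
            · exact le_trans (le_of_lt hgt) (hat b hb)
          omega
        · intro _
          exact le_trans (le_of_lt hgt) (hat _ (List.get_mem t _))

lemma card_lt_fin (N k : ℕ) (hk : k ≤ N) :
    (Finset.univ.filter fun r : Fin N => (r : ℕ) < k).card = k := by
  rw [← Fintype.card_subtype, Fintype.card_eq_nat_card]
  have e : {r : Fin N // (r : ℕ) < k} ≃ Fin k :=
    { toFun := fun r => ⟨r.1, r.2⟩
      invFun := fun r => ⟨⟨r.1, lt_of_lt_of_le r.2 hk⟩, r.2⟩
      left_inv := fun r => rfl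
      right_inv := fun r => rfl }
  rw [Nat.card_congr e]; simp

lemma rank_card (N k : ℕ) (hk : k ≤ N) (v : Fin N → ℝ) (hv : Function.Injective v) :
    (Finset.univ.filter fun j : Fin N =>
      (Finset.univ.filter fun i : Fin N => v i < v j).card < k).card = k := by
  have hbound : ∀ j : Fin N, (Finset.univ.filter fun i => v i < v j).card < N := by
    intro j
    have hsub : (Finset.univ.filter fun i => v i < v j) ⊆ Finset.univ.erase j := by
      intro i hi
      simp only [mem_filter, mem_univ, true_and] at hi
      exact Finset.mem_erase.2 ⟨fun h => absurd (h ▸ hi) (lt_irrefl _), mem_univ i⟩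
    calc (Finset.univ.filter fun i => v i < v j).card
        ≤ (Finset.univ.erase j).card := Finset.card_le_card hsub
      _ < Finset.univ.card := Finset.card_erase_lt_of_mem (mem_univ j)
      _ = N := by simp
  set rank : Fin N → Fin N := fun j => ⟨_, hbound j⟩ with hrank
  have hmono : ∀ j1 j2 : Fin N, v j1 < v j2 → (rank j1 : ℕ) < (rank j2 : ℕ) := by
    intro j1 j2 h
    show (Finset.univ.filter fun i => v i < v j1).card < (Finset.univ.filter fun i => v i < v j2).card
    apply Finset.card_lt_card
    constructor
    · intro i hi
      simp only [mem_filter, mem_univ, true_and] at hi ⊢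
      exact lt_trans hi h
    · intro hsub
      have : j1 ∈ (Finset.univ.filter fun i => v i < v j1) := hsub (by simp [h])
      simp at this
  have hinj : Function.Injective rank := by
    intro j1 j2 h
    by_contra hne
    rcases lt_trichotomy (v j1) (v j2) with h1 | h1 | h1
    · exact absurd (congrArg Fin.val h) (Nat.ne_of_lt (hmono _ _ h1))
    · exact hne (hv h1)
    · exact absurd (congrArg Fin.val h).symm (Nat.ne_of_lt (hmono _ _ h1))
  have hbij : Function.Bijective rank := Finite.injective_iff_bijective.1 hinj
  have : (Finset.univ.filter fun j : Fin N =>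
      (Finset.univ.filter fun i : Fin N => v i < v j).card < k).card
      = (Finset.univ.filter fun r : Fin N => (r : ℕ) < k).card := by
    rw [← Fintype.card_subtype, ← Fintype.card_subtype]
    exact Fintype.card_congr ((Equiv.ofBijective rank hbij).subtypeEquiv (fun j => Iff.rfl))
  rw [this, card_lt_fin N k hk]

lemma card_filter_comp_perm {n : ℕ} (σ : Equiv.Perm (Fin n)) (p : Fin n → Prop)
    [DecidablePred p] :
    (Finset.univ.filter fun i => p (σ i)).card = (Finset.univ.filter p).card := by
  rw [← Fintype.card_subtype, ← Fintype.card_subtype]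
  exact Fintype.card_congr (σ.subtypeEquiv fun i => Iff.rfl)

/-- split conformal prediction with the box score. If `q*` is the
`⌊(M+1)(1−α)⌋`-th smallest of `M` calibration scores, the scores together with the
fresh score are exchangeable with no ties a.s., and the fresh score is the box
nonconformity score of `(W, Y)`, then the inflated prediction box contains `Y`
with probability at least `⌊(M+1)(1−α)⌋/(M+1)`. -/
theorem conformal_box_coverage
    {Ω 𝕎 : Type*} [MeasurableSpace Ω] (μ : Measure Ω) [IsProbabilityMeasure μ]
    (M m : ℕ) (hM : 1 ≤ M) (hm : 0 < m)
    (α : ℝ) (hα : α ∈ Set.Ioo (0 : ℝ) 1)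
    (S : Fin (M + 1) → Ω → ℝ)
    (hexch : ∀ σ : Equiv.Perm (Fin (M + 1)),
      IdentDistrib (fun ω => fun i => S (σ i) ω) (fun ω => fun i => S i ω) μ μ)
    (hties : ∀ i j, i ≠ j → μ {ω | S i ω = S j ω} = 0)
    (W : Ω → 𝕎) (Y : Ω → Fin m → ℝ) (flo fhi : 𝕎 → Fin m → ℝ)
    (hscore : ∀ ω, S (Fin.last M) ω =
      sSup (Set.range fun i : Fin m => max (flo (W ω) i - Y ω i) (Y ω i - fhi (W ω) i)))
    (qstar : Ω → ℝ)
    (hq : ∀ ω, qstar ω =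
      (List.insertionSort (· ≤ ·) (List.ofFn fun i : Fin M => S i.castSucc ω)).getD
        (⌊((M : ℝ) + 1) * (1 - α)⌋₊ - 1) 0)
    (hk1 : 1 ≤ ⌊((M : ℝ) + 1) * (1 - α)⌋₊)
    (hkM : ⌊((M : ℝ) + 1) * (1 - α)⌋₊ ≤ M) :
    ENNReal.ofReal ((⌊((M : ℝ) + 1) * (1 - α)⌋₊ : ℝ) / ((M : ℝ) + 1)) ≤
      μ {ω | ∀ i, Y ω i ∈ Set.Icc (flo (W ω) i - qstar ω) (fhi (W ω) i + qstar ω)} := by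
  classical
  set k : ℕ := ⌊((M : ℝ) + 1) * (1 - α)⌋₊ with hkdef
  have hmne : Nonempty (Fin m) := ⟨⟨0, hm⟩⟩
  -- measurable modification of the score vector
  set X : Ω → (Fin (M + 1) → ℝ) := fun ω => fun i => S i ω with hXdef
  have hXae : AEMeasurable X μ := (hexch 1).aemeasurable_snd
  set g : Ω → (Fin (M + 1) → ℝ) := hXae.mk X with hgdef
  have hg : Measurable g := hXae.measurable_mk
  have hgX : ∀ᵐ ω ∂μ, g ω = X ω := hXae.ae_eq_mk.symm
  -- a.e. injectivity
  have hT : ∀ᵐ ω ∂μ, Function.Injective (fun i => S i ω) := by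
    have h1 : ∀ᵐ ω ∂μ, ∀ i j : Fin (M + 1), i ≠ j → S i ω ≠ S j ω := by
      rw [ae_all_iff]
      intro i
      rw [ae_all_iff]
      intro j
      by_cases hij : i = j
      · filter_upwards with ω h; exact absurd hij h
      · have := hties i j hij
        rw [ae_iff]
        convert this using 2
        ext ω
        simp [hij]
    filter_upwards [h1] with ω h
    intro i j hij
    by_contra hne
    exact h i j hne hij
  have hG : ∀ᵐ ω ∂μ, g ω = X ω ∧ Function.Injective (fun i => S i ω) := hgX.and hT
  -- events F j
  set cardf : Fin (M + 1) → (Fin (M + 1) → ℝ) → ℕ :=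
    fun j f => (Finset.univ.filter fun i => f i < f j).card with hcardf
  have hcard_meas : ∀ j, Measurable (cardf j) := by
    intro j
    simp only [hcardf, Finset.card_filter]
    exact Finset.measurable_sum _ fun i _ =>
      Measurable.ite (measurableSet_lt (measurable_pi_apply i) (measurable_pi_apply j))
        measurable_const measurable_const
  set B : Fin (M + 1) → Set (Fin (M + 1) → ℝ) := fun j => (cardf j) ⁻¹' {n | n < k}
    with hBdef
  have hB : ∀ j, MeasurableSet (B j) := fun j => (hcard_meas j) trivial
  set F : Fin (M + 1) → Set Ω := fun j => g ⁻¹' (B j) with hFdef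
  have hF : ∀ j, MeasurableSet (F j) := fun j => hg (hB j)
  -- equal measures by exchangeability
  have hFeq : ∀ j, μ (F j) = μ (F (Fin.last M)) := by
    intro j
    set σ : Equiv.Perm (Fin (M + 1)) := Equiv.swap j (Fin.last M) with hσ
    have hmeas2 : Measurable (fun ω => fun i => g ω (σ i)) :=
      measurable_pi_lambda _ fun i => (measurable_pi_apply (σ i)).comp hg
    have hid : IdentDistrib (fun ω => fun i => g ω (σ i)) g μ μ := by
      refine ⟨hmeas2.aemeasurable, hg.aemeasurable, ?_⟩
      have e1 : Measure.map (fun ω => fun i => g ω (σ i)) μ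
          = Measure.map (fun ω => fun i => S (σ i) ω) μ := by
        apply Measure.map_congr
        filter_upwards [hgX] with ω h
        funext i
        rw [h]
      have e2 : Measure.map (fun ω => fun i => S (σ i) ω) μ = Measure.map X μ :=
        (hexch σ).map_eq
      have e3 : Measure.map g μ = Measure.map X μ := Measure.map_congr hgX
      rw [e1, e2, e3]
    have key := hid.measure_mem_eq (hB (Fin.last M))
    have hpre : (fun ω => fun i => g ω (σ i)) ⁻¹' (B (Fin.last M)) = F j := by
      ext ω
      simp only [hFdef, hBdef, Set.mem_preimage, Set.mem_setOf_eq, hcardf]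
      have hσl : σ (Fin.last M) = j := Equiv.swap_apply_right j (Fin.last M)
      simp only [hσl]
      rw [card_filter_comp_perm σ (fun i => g ω i < g ω j)]
    rw [hpre] at key
    exact key
  -- sum of measures equals k
  have hsum : ∑ j : Fin (M + 1), μ (F j) = (k : ℝ≥0∞) := by
    have e1 : ∀ j, μ (F j) = ∫⁻ ω, (F j).indicator (fun _ => (1 : ℝ≥0∞)) ω ∂μ := by
      intro j
      rw [lintegral_indicator (hF j)]
      simp
    simp_rw [e1]
    rw [← lintegral_finset_sum _ (fun j _ =>
      (measurable_const.indicator (hF j) : Measurable _))]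
    have e2 : ∀ᵐ ω ∂μ, ∑ j : Fin (M + 1), (F j).indicator (fun _ => (1 : ℝ≥0∞)) ω
        = (k : ℝ≥0∞) := by
      filter_upwards [hG] with ω hω
      have hinj : Function.Injective (fun i => g ω i) := by
        have : (fun i => g ω i) = fun i => S i ω := by
          funext i; rw [hω.1]
        rw [this]; exact hω.2
      have hrk := rank_card (M + 1) k (le_trans hkM (Nat.le_succ M)) (fun i => g ω i) hinj
      have e3 : ∑ j : Fin (M + 1), (F j).indicator (fun _ => (1 : ℝ≥0∞)) ω
          = ((Finset.univ.filter fun j : Fin (M + 1) =>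
              (Finset.univ.filter fun i => g ω i < g ω j).card < k).card : ℝ≥0∞) := by
        rw [Finset.card_filter]
        push_cast
        apply Finset.sum_congr rfl
        intro j _
        simp only [Set.indicator_apply, hFdef, hBdef, Set.mem_preimage, Set.mem_setOf_eq,
          hcardf]
        try rfl
        try (split <;> simp)
      rw [e3, hrk]
    rw [lintegral_congr_ae e2, lintegral_const, measure_univ, mul_one]
  have hNmul : ((M : ℝ≥0∞) + 1) * μ (F (Fin.last M)) = (k : ℝ≥0∞) := by
    rw [← hsum]
    rw [Finset.sum_congr rfl (fun j _ => hFeq j)]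
    rw [Finset.sum_const, Finset.card_univ, Fintype.card_fin, nsmul_eq_mul]
    push_cast
    ring
  have hFlast : μ (F (Fin.last M)) = (k : ℝ≥0∞) / ((M : ℝ≥0∞) + 1) :=
    (ENNReal.eq_div_iff (by simp) (by finiteness)).2 hNmul
  -- inclusion: good ∩ F last ⊆ target event
  have hsub : ∀ ω, (g ω = X ω ∧ Function.Injective (fun i => S i ω)) → ω ∈ F (Fin.last M) →
      (∀ i, Y ω i ∈ Set.Icc (flo (W ω) i - qstar ω) (fhi (W ω) i + qstar ω)) := by
    intro ω hω hF
    set s : ℝ := S (Fin.last M) ω with hsdef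
    set l0 : List ℝ := List.ofFn (fun i : Fin M => S i.castSucc ω) with hl0
    set l : List ℝ := List.insertionSort (· ≤ ·) l0 with hl
    have hlen : l.length = M := by
      rw [hl, List.length_insertionSort, hl0, List.length_ofFn]
    have hkm : k - 1 < l.length := by omega
    have hslmem : s ∉ l := by
      intro hmem
      rw [hl] at hmem
      rw [(List.perm_insertionSort (· ≤ ·) l0).mem_iff, hl0, List.mem_ofFn] at hmem
      obtain ⟨i, hi⟩ := hmem
      exact absurd (hω.2 hi) (Fin.ne_last_of_lt (Fin.castSucc_lt_last i))
    have hqeq : qstar ω = l.get ⟨k - 1, hkm⟩ := by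
      rw [hq ω]; exact List.getD_eq_get (l := l) (d := 0) ⟨k - 1, hkm⟩
    -- rank over Fin (M+1) in terms of count over Fin M
    have hcount : (Finset.univ.filter fun i : Fin (M + 1) => S i ω < s).card =
        l.countP (fun x => decide (x < s)) := by
      have c1 : l.countP (fun x => decide (x < s)) = l0.countP (fun x => decide (x < s)) :=
        (List.perm_insertionSort (· ≤ ·) l0).countP_eq _
      rw [c1, hl0, cnt_eq M _ (fun x => x < s)]
      rw [Finset.card_filter, Finset.card_filter, Fin.sum_univ_castSucc]
      have : ¬ (S (Fin.last M) ω < s) := by rw [← hsdef]; exact lt_irrefl s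
      simp [this]
    -- from F last membership to s ≤ qstar
    have hrank : (Finset.univ.filter fun i : Fin (M + 1) => S i ω < s).card < k := by
      have : ω ∈ F (Fin.last M) := hF
      simp only [hFdef, hBdef, Set.mem_preimage, Set.mem_setOf_eq, hcardf] at this
      convert this using 2
      ext i
      simp only [mem_filter, mem_univ, true_and]
      rw [hω.1]
    have hsq : s ≤ qstar ω := by
      rw [hqeq]
      rw [sorted_le_get_iff l (List.pairwise_insertionSort _ _) s hslmem (k - 1) hkm]
      omega
    -- conclude box membership
    intro i
    have hle : max (flo (W ω) i - Y ω i) (Y ω i - fhi (W ω) i) ≤ qstar ω := by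
      refine le_trans (le_trans ?_ (le_of_eq (hscore ω).symm)) hsq
      apply le_csSup (Set.Finite.bddAbove (Set.finite_range _))
      exact Set.mem_range_self i
    constructor
    · linarith [le_of_max_le_left hle]
    · linarith [le_of_max_le_right hle]
  -- final measure bound
  have hEsub : {ω | g ω = X ω ∧ Function.Injective (fun i => S i ω)} ∩ F (Fin.last M) ⊆
      {ω | ∀ i, Y ω i ∈ Set.Icc (flo (W ω) i - qstar ω) (fhi (W ω) i + qstar ω)} := by
    intro ω ⟨h1, h2⟩
    exact hsub ω h1 h2
  have hGc : μ {ω | g ω = X ω ∧ Function.Injective (fun i => S i ω)}ᶜ = 0 := by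
    rw [Set.compl_setOf]
    exact ae_iff.1 hG
  have hmeasE : (k : ℝ≥0∞) / ((M : ℝ≥0∞) + 1) ≤
      μ {ω | ∀ i, Y ω i ∈ Set.Icc (flo (W ω) i - qstar ω) (fhi (W ω) i + qstar ω)} := by
    rw [← hFlast]
    calc μ (F (Fin.last M))
        ≤ μ ({ω | g ω = X ω ∧ Function.Injective (fun i => S i ω)} ∩ F (Fin.last M))
          + μ {ω | g ω = X ω ∧ Function.Injective (fun i => S i ω)}ᶜ := by
          refine le_trans (measure_mono ?_) (measure_union_le _ _)
          intro ω hω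
          by_cases h : g ω = X ω ∧ Function.Injective (fun i => S i ω)
          · exact Or.inl ⟨h, hω⟩
          · exact Or.inr h
      _ = μ ({ω | g ω = X ω ∧ Function.Injective (fun i => S i ω)} ∩ F (Fin.last M)) := by
          rw [hGc, add_zero]
      _ ≤ _ := measure_mono hEsub
  refine le_trans (le_of_eq ?_) hmeasE
  rw [ENNReal.ofReal_div_of_pos (by positivity)]
  congr 1
  · exact ENNReal.ofReal_natCast k
  · rw [show ((M : ℝ) + 1) = ((M + 1 : ℕ) : ℝ) by push_cast; ring]
    rw [ENNReal.ofReal_natCast]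
    push_cast
    ring
end
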